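/- Let 0 < p ≤ q ≤ 1. The function f(t) = (p/q)·(t^q − 1)/(t^p − 1) (with f(1) = 1) is monotone increasing on (0, ∞). -/

import Mathlib

open Real

theorem stmt_14 (p q : ℝ) (hp : 0 < p) (hpq : p ≤ q) (hq : q ≤ 1)
    (f : ℝ → ℝ) (hf : ∀ t, f t = if t = 1 then 1 else p / q * (t ^ q - 1) / (t ^ p - 1)) :
    MonotoneOn f (Set.Ioi (0 : ℝ)) := by
  have hq0 : 0 < q := lt_of_lt_of_le hp hpq
  set r : ℝ := (q - p) / p with hr
  have hr0 : 0 ≤ r := div_nonneg (by linarith) hp.le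
  have hr1 : r + 1 = q / p := by field_simp [hr]; rw [hr, add_mul, div_mul_cancel₀ _ hp.ne']; ring
  have hbase : ∀ t : ℝ, 0 < t → ∀ l ∈ Set.Icc (0:ℝ) 1, 0 < l * t ^ p + (1 - l) := by
    intro t ht l hl
    have htp : 0 < t ^ p := Real.rpow_pos_of_pos ht p
    rcases eq_or_lt_of_le hl.1 with h | h
    · simp [← h]
    · nlinarith [mul_pos h htp, hl.2]
  have hint : ∀ t : ℝ, 0 < t →
      IntervalIntegrable (fun l => (l * t ^ p + (1 - l)) ^ r) MeasureTheory.volume 0 1 := by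
    intro t ht
    apply ContinuousOn.intervalIntegrable
    apply ContinuousOn.rpow_const
    · fun_prop
    · intro x _; exact Or.inr hr0
  have hval : ∀ t ∈ Set.Ioi (0:ℝ),
      (∫ l in (0:ℝ)..1, (l * t ^ p + (1 - l)) ^ r) = f t := by
    intro t ht
    simp only [Set.mem_Ioi] at ht
    rcases eq_or_ne t 1 with h1 | h1
    · subst h1
      rw [hf]
      simp [Real.one_rpow]
    · have htp : 0 < t ^ p := Real.rpow_pos_of_pos ht p
      have htp1 : t ^ p ≠ 1 := by
        rcases lt_or_gt_of_ne h1 with h | h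
        · exact ne_of_lt (Real.rpow_lt_one ht.le h hp)
        · exact ne_of_gt ((Real.one_lt_rpow_iff_of_pos ht).mpr (Or.inl ⟨h, hp⟩))
      have hd : t ^ p - 1 ≠ 0 := sub_ne_zero.mpr htp1
      have hr1pos : 0 < r + 1 := by rw [hr1]; positivity
      set F : ℝ → ℝ := fun l => ((t ^ p - 1) * l + 1) ^ (r + 1) / ((r + 1) * (t ^ p - 1))
        with hF
      have hderiv : ∀ l ∈ Set.Icc (0:ℝ) 1,
          HasDerivAt F ((l * t ^ p + (1 - l)) ^ r) l := by
        intro l hl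
        have hu : 0 < (t ^ p - 1) * l + 1 := by
          have := hbase t ht l hl; linarith [this]
        have h1 : HasDerivAt (fun l : ℝ => (t ^ p - 1) * l + 1) (t ^ p - 1) l := by
          simpa using ((hasDerivAt_id l).const_mul (t ^ p - 1)).add_const 1
        have h2 := h1.rpow_const (p := r + 1) (Or.inl hu.ne')
        have h3 := h2.div_const ((r + 1) * (t ^ p - 1))
        have heq : (t ^ p - 1) * (r + 1) * ((t ^ p - 1) * l + 1) ^ r
            / ((r + 1) * (t ^ p - 1)) = (l * t ^ p + (1 - l)) ^ r := by
          have h4 : (t ^ p - 1) * l + 1 = l * t ^ p + (1 - l) := by ring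
          rw [h4]; field_simp
        rw [hF]
        simpa [heq] using h3
      have hFTC := intervalIntegral.integral_eq_sub_of_hasDerivAt
        (fun l hl => hderiv l (by simpa [Set.uIcc_of_le (zero_le_one)] using hl))
        (hint t ht)
      rw [hFTC, hf, if_neg h1, hF]
      have hpow : (t ^ p) ^ (q / p) = t ^ q := by
        rw [← Real.rpow_mul ht.le]
        congr 1; field_simp
      simp only [mul_one, mul_zero, zero_add, sub_add_cancel, Real.one_rpow, hr1, hpow]
      field_simp
  intro a ha b hb hab
  rw [← hval a ha, ← hval b hb]
  apply intervalIntegral.integral_mono_on zero_le_one (hint a (Set.mem_Ioi.mp ha))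
    (hint b (Set.mem_Ioi.mp hb))
  intro l hl
  simp only [Set.mem_Ioi] at ha hb
  have hap : a ^ p ≤ b ^ p := Real.rpow_le_rpow ha.le hab hp.le
  exact Real.rpow_le_rpow (hbase a ha l hl).le
    (by nlinarith [hl.1]) hr0
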